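/- For every year y ≥ 1, write y = 100c + r where c = ⌊y/100⌋ and r = y mod 100. Let m be a month with 1 ≤ m ≤ 12 such that it is NOT the case that y is a leap year and m ≤ 2, let w be a weekday code with 0 ≤ w ≤ 6, and let d be a day with 1 ≤ d ≤ (length of month m in year y). Then W(y,m,d) = w if and only if d ≡ w − M(m) − C(c) − Y(r) (mod 7). In particular, the dates in month m of year y falling on the weekday with code w are exactly those d congruent to (w − (M(m) + C(c) + Y(r))) mod 7 modulo 7. -/

import Mathlib

/-- A Gregorian leap year. -/
def IsLeapYear (y : ℕ) : Prop := y % 4 = 0 ∧ (y % 100 ≠ 0 ∨ y % 400 = 0)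

instance : DecidablePred IsLeapYear := fun y =>
  inferInstanceAs (Decidable (y % 4 = 0 ∧ (y % 100 ≠ 0 ∨ y % 400 = 0)))

/-- Total number of days in the months strictly before month `m`
in an ordinary (non-leap) year. -/
def daysBeforeOrdinary : ℕ → ℕ
  | 1 => 0
  | 2 => 31
  | 3 => 59
  | 4 => 90
  | 5 => 120
  | 6 => 151
  | 7 => 181
  | 8 => 212
  | 9 => 243
  | 10 => 273
  | 11 => 304
  | 12 => 334
  | _ => 0

/-- Number of days in month `m` of year `y`. -/
def monthLength (y m : ℕ) : ℕ :=
  if m = 2 then (if IsLeapYear y then 29 else 28)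
  else if m = 4 ∨ m = 6 ∨ m = 9 ∨ m = 11 then 30 else 31

/-- Number of days in year `y` strictly before month `m`. -/
def daysBeforeMonth (y m : ℕ) : ℕ :=
  if IsLeapYear y ∧ 3 ≤ m then daysBeforeOrdinary m + 1 else daysBeforeOrdinary m

/-- Absolute day number of the date `(y, m, d)`: the number of days from
1 January of year 1 of the proleptic Gregorian calendar up to and including
the given date. -/
def absDayNumber (y m d : ℕ) : ℕ :=
  365 * (y - 1) + (y - 1) / 4 - (y - 1) / 100 + (y - 1) / 400 + daysBeforeMonth y m + d

/-- The day-of-week code of the date `(y, m, d)`: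
0 = Saturday, 1 = Sunday, ..., 6 = Friday. -/
def weekdayCode (y m d : ℕ) : ℕ := (absDayNumber y m d + 1) % 7

/-- The Gauss month code. -/
def gaussM : ℕ → ℕ
  | 1 => 0
  | 2 => 3
  | 3 => 3
  | 4 => 6
  | 5 => 1
  | 6 => 4
  | 7 => 6
  | 8 => 2
  | 9 => 5
  | 10 => 0
  | 11 => 3
  | 12 => 5
  | _ => 0

/-- The Gauss century code. -/
def gaussC (c : ℕ) : ℕ := (2 * (3 - c % 4) + 1) % 7

/-- The Gauss year code. -/
def gaussY (r : ℕ) : ℕ := (r + r / 4) % 7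

private lemma leap_elim (y : ℕ) (hy : 1 ≤ y) :
    365*(y-1) + (y-1)/4 - (y-1)/100 + (y-1)/400 + (if IsLeapYear y then 1 else 0)
      = 365*(y-1) + y/4 - y/100 + y/400 := by
  have a1 : (y-1)/4 ≥ (y-1)/100 := by omega
  have b4 : if y % 4 = 0 then y/4 = (y-1)/4 + 1 else y/4 = (y-1)/4 := by
    split <;> omega
  have b100 : if y % 100 = 0 then y/100 = (y-1)/100 + 1 else y/100 = (y-1)/100 := by
    split <;> omega
  have b400 : if y % 400 = 0 then y/400 = (y-1)/400 + 1 else y/400 = (y-1)/400 := by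
    split <;> omega
  have i1 : y % 400 = 0 → y % 100 = 0 := by omega
  have i2 : y % 100 = 0 → y % 4 = 0 := by omega
  split_ifs with hl <;> unfold IsLeapYear at hl
  · obtain ⟨h4, h100⟩ := hl
    rcases h100 with h | h
    · rw [if_pos h4] at b4; rw [if_neg h] at b100
      have : y % 400 ≠ 0 := fun hh => h (i1 hh)
      rw [if_neg this] at b400; omega
    · rw [if_pos h4] at b4; rw [if_pos (i1 h)] at b100; rw [if_pos h] at b400; omega
  · push_neg at hl
    by_cases h4 : y % 4 = 0
    · obtain ⟨h100, h400⟩ := hl h4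
      rw [if_pos h4] at b4; rw [if_pos h100] at b100; rw [if_neg h400] at b400; omega
    · rw [if_neg h4] at b4
      have : y % 100 ≠ 0 := fun hh => h4 (i2 hh)
      rw [if_neg this] at b100
      have h400 : y % 400 ≠ 0 := fun hh => this (i1 hh)
      rw [if_neg h400] at b400; omega

private lemma year_mod (y : ℕ) (hy : 1 ≤ y) :
    (365*(y-1) + y/4 - y/100 + y/400 + 1) % 7
      = (gaussC (y/100) + gaussY (y%100)) % 7 := by
  unfold gaussC gaussY
  rw [← Nat.add_mod]
  have h1 : y / 4 = 25 * (y/100) + (y%100)/4 := by omega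
  have h2 : y / 400 = (y/100)/4 := by omega
  rw [h1, h2]
  generalize hr : y % 100 = r at *
  have hy' : y = 100 * (y/100) + r := by omega
  generalize hc : y / 100 = c at *
  have hr' : r < 100 := by omega
  subst hy'
  generalize hb : c % 4 = b
  have hc' : c = 4 * (c/4) + b := by omega
  generalize hq : c / 4 = q at *
  have hs : r / 4 ≤ 24 := by omega
  generalize hs' : r / 4 = s at *
  subst hc'
  omega

private lemma month_mod (m : ℕ) (hm1 : 1 ≤ m) (hm2 : m ≤ 12) :
    daysBeforeOrdinary m % 7 = gaussM m := by
  interval_cases m <;> rfl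

private lemma gaussM_le (m : ℕ) : gaussM m ≤ 6 := by
  rw [gaussM.eq_def]; split <;> omega

theorem dates_of_weekday_ordinary (y m w d : ℕ) (hy : 1 ≤ y)
    (hm1 : 1 ≤ m) (hm2 : m ≤ 12) (h : ¬ (IsLeapYear y ∧ m ≤ 2))
    (hw : w ≤ 6) (hd1 : 1 ≤ d) (hd2 : d ≤ monthLength y m) :
    weekdayCode y m d = w ↔
      (d : ℤ) ≡ (w : ℤ) - gaussM m - gaussC (y / 100) - gaussY (y % 100) [ZMOD 7] := by
  have hdb : daysBeforeMonth y m = daysBeforeOrdinary m + (if IsLeapYear y then 1 else 0) := by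
    unfold daysBeforeMonth
    by_cases hl : IsLeapYear y
    · have hm3 : 3 ≤ m := by
        by_contra hc
        exact h ⟨hl, by omega⟩
      rw [if_pos ⟨hl, hm3⟩, if_pos hl]
    · rw [if_neg (fun hc => hl hc.1), if_neg hl, Nat.add_zero]
  have key : weekdayCode y m d
      = (d + gaussM m + gaussC (y/100) + gaussY (y%100)) % 7 := by
    unfold weekdayCode absDayNumber
    rw [hdb]
    have e1 : 365 * (y - 1) + (y - 1) / 4 - (y - 1) / 100 + (y - 1) / 400 +
        (daysBeforeOrdinary m + (if IsLeapYear y then 1 else 0)) + d + 1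
        = (365*(y-1) + (y-1)/4 - (y-1)/100 + (y-1)/400 + (if IsLeapYear y then 1 else 0))
          + daysBeforeOrdinary m + d + 1 := by omega
    rw [e1, leap_elim y hy]
    have e2 : 365*(y-1) + y/4 - y/100 + y/400 + daysBeforeOrdinary m + d + 1
        = (365*(y-1) + y/4 - y/100 + y/400 + 1) + daysBeforeOrdinary m + d := by omega
    rw [e2]
    have hy7 := year_mod y hy
    have hm7 := month_mod m hm1 hm2
    omega
  have hM := gaussM_le m
  have hC : gaussC (y/100) < 7 := Nat.mod_lt _ (by norm_num)
  have hY : gaussY (y%100) < 7 := Nat.mod_lt _ (by norm_num)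
  rw [key, Int.ModEq]
  constructor
  · intro hh; omega
  · intro hh; omega
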